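/- Fix integers n_obs ≥ 1 and n_mis ≥ 1, n = n_obs + n_mis, observed values y_1,…,y_{n_obs} > 0 and c > 0. Define the h-likelihood h(θ, v) = -n log θ - (∑_{i=1}^{n_obs} y_i)/θ + ∑_{j=1}^{n_mis} ( -(c + e^{v_j})/θ + v_j ) for θ > 0 and v ∈ ℝ^{n_mis}. Then: (i) for each fixed θ > 0, v ↦ h(θ, v) has unique global maximizer ṽ(θ) with ṽ_j(θ) = log θ for all j; (ii) for all θ > 0, h(θ, ṽ(θ)) = -n_obs log θ - (∑_{i=1}^{n_obs} y_i + n_mis c)/θ - n_mis = ℓ_m(θ) - n_mis, where ℓ_m(θ) = -n_obs log θ - (∑ y_i + n_mis c)/θ is the marginal log-likelihood; and (iii) ℓ_m has unique global maximizer over θ > 0 at θ̂ = ȳ_obs + n_mis c / n_obs, with ȳ_obs = n_obs⁻¹ ∑_{i=1}^{n_obs} y_i. -/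

import Mathlib

lemma coord_le (θ v : ℝ) (hθ : 0 < θ) :
    -(Real.exp v) / θ + v ≤ -(Real.exp (Real.log θ)) / θ + Real.log θ := by
  rw [Real.exp_log hθ]
  have hx : 0 < Real.exp v / θ := div_pos (Real.exp_pos v) hθ
  have hlog : Real.log (Real.exp v / θ) ≤ Real.exp v / θ - 1 :=
    Real.log_le_sub_one_of_pos hx
  rw [Real.log_div (Real.exp_pos v).ne' hθ.ne', Real.log_exp] at hlog
  have h1 : θ / θ = 1 := div_self hθ.ne'
  have h2 : -(Real.exp v) / θ = -(Real.exp v / θ) := by ring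
  have h3 : -θ / θ = -(θ / θ) := by ring
  rw [h2, h3, h1]
  linarith

lemma coord_lt (θ v : ℝ) (hθ : 0 < θ) (hv : v ≠ Real.log θ) :
    -(Real.exp v) / θ + v < -(Real.exp (Real.log θ)) / θ + Real.log θ := by
  rw [Real.exp_log hθ]
  have hx : 0 < Real.exp v / θ := div_pos (Real.exp_pos v) hθ
  have hx1 : Real.exp v / θ ≠ 1 := by
    intro h1
    apply hv
    have he : Real.exp v = θ := by
      field_simp at h1; linarith
    rw [← he, Real.log_exp]
  have hlog : Real.log (Real.exp v / θ) < Real.exp v / θ - 1 :=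
    Real.log_lt_sub_one_of_pos hx hx1
  rw [Real.log_div (Real.exp_pos v).ne' hθ.ne', Real.log_exp] at hlog
  have h1 : θ / θ = 1 := div_self hθ.ne'
  have h2 : -(Real.exp v) / θ = -(Real.exp v / θ) := by ring
  have h3 : -θ / θ = -(θ / θ) := by ring
  rw [h2, h3, h1]
  linarith

theorem censored_exponential_hlik (nobs nmis : ℕ)
    (h1 : 1 ≤ nobs) (h2 : 1 ≤ nmis)
    (y : Fin nobs → ℝ) (hy : ∀ i, 0 < y i) (c : ℝ) (hc : 0 < c)
    (h : ℝ → (Fin nmis → ℝ) → ℝ)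
    (hdef : ∀ θ : ℝ, ∀ v : Fin nmis → ℝ, h θ v =
      -((nobs + nmis : ℕ) : ℝ) * Real.log θ - (∑ i, y i) / θ +
        ∑ j, (-(c + Real.exp (v j)) / θ + v j))
    (ℓm : ℝ → ℝ)
    (hℓm : ∀ θ : ℝ, ℓm θ =
      -(nobs : ℝ) * Real.log θ - ((∑ i, y i) + (nmis : ℝ) * c) / θ) :
    (∀ θ : ℝ, 0 < θ → ∀ v : Fin nmis → ℝ,
      v ≠ (fun _ => Real.log θ) → h θ v < h θ (fun _ => Real.log θ)) ∧
    (∀ θ : ℝ, 0 < θ → h θ (fun _ => Real.log θ) = ℓm θ - (nmis : ℝ)) ∧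
    (∀ θ : ℝ, 0 < θ → θ ≠ (∑ i, y i) / (nobs : ℝ) + (nmis : ℝ) * c / (nobs : ℝ) →
      ℓm θ < ℓm ((∑ i, y i) / (nobs : ℝ) + (nmis : ℝ) * c / (nobs : ℝ))) := by
  refine ⟨?_, ?_, ?_⟩
  · intro θ hθ v hv
    rw [hdef, hdef]
    have key : ∀ w : ℝ, -(c + Real.exp w) / θ + w
        = -c/θ + (-(Real.exp w)/θ + w) := by intro w; ring
    simp only [key]
    have hsum : ∑ j, (-c/θ + (-(Real.exp (v j))/θ + v j)) <
        ∑ _j : Fin nmis, (-c/θ + (-(Real.exp (Real.log θ))/θ + Real.log θ)) := by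
      obtain ⟨j0, hj0⟩ : ∃ j, v j ≠ Real.log θ := by
        by_contra hcon
        push_neg at hcon
        exact hv (funext hcon)
      refine Finset.sum_lt_sum (fun j _ => ?_) ⟨j0, Finset.mem_univ j0, ?_⟩
      · have := coord_le θ (v j) hθ; linarith
      · have := coord_lt θ (v j0) hθ hj0; linarith
    linarith
  · intro θ hθ
    rw [hdef, hℓm, Real.exp_log hθ]
    rw [Finset.sum_const, Finset.card_univ, Fintype.card_fin]
    push_cast
    field_simp
    have e : θ * θ⁻¹ = 1 := mul_inv_cancel₀ hθ.ne'
    linear_combination ((nmis : ℝ) * Real.log θ * θ - (nmis : ℝ) * c - (nmis : ℝ) * θ) * e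
  · intro θ hθ hne
    have hn : (0 : ℝ) < (nobs : ℝ) := by exact_mod_cast h1
    have hm : (0 : ℝ) < (nmis : ℝ) := by exact_mod_cast h2
    have hne' : Nonempty (Fin nobs) := ⟨⟨0, h1⟩⟩
    have hS : 0 < ∑ i, y i := Finset.sum_pos (fun i _ => hy i) Finset.univ_nonempty
    set A : ℝ := (∑ i, y i) + (nmis : ℝ) * c with hA
    have hApos : 0 < A := by positivity
    have hθhat : (∑ i, y i) / (nobs : ℝ) + (nmis : ℝ) * c / (nobs : ℝ) = A / nobs := by
      rw [hA]; ring
    rw [hℓm, hℓm, hθhat]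
    have hθhatpos : 0 < A / (nobs : ℝ) := div_pos hApos hn
    set x : ℝ := (A / (nobs : ℝ)) / θ with hx
    have hxpos : 0 < x := div_pos hθhatpos hθ
    have hx1 : x ≠ 1 := by
      intro hx1
      apply hne
      rw [hθhat]
      have hxx : A / (nobs : ℝ) = θ := by
        rw [hx] at hx1
        field_simp at hx1
        rw [hx1]
        field_simp
      linarith
    have hlog : Real.log x < x - 1 := Real.log_lt_sub_one_of_pos hxpos hx1
    have hlx : Real.log x = Real.log (A / (nobs : ℝ)) - Real.log θ :=
      Real.log_div hθhatpos.ne' hθ.ne'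
    have hAθ : A / θ = (nobs : ℝ) * x := by
      rw [hx]; field_simp
    have hAhat : A / (A / (nobs : ℝ)) = (nobs : ℝ) := by
      field_simp
    rw [hAhat, hAθ]
    nlinarith [hlog, hlx, hn]
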